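/- Define P_s(x) = ∑_{i+2j=s, i,j≥0} x^i / (6^j i! j!) for s ≥ 0 and P_s = 0 for s < 0, and the generalized Hermite polynomial H_{m,n}(x) = det( P_{n−i+j}(x) )_{i,j=1}^{m}. Then the leading coefficient of H_{m,n} (as a polynomial in x of degree mn) equals G(m+1)G(n+1)/G(m+n+1), where G is the Barnes G-function determined by G(1) = 1 and G(z+1) = Γ(z)G(z), i.e. the leading coefficient is ∏_{i=1}^{m} (i−1)! · ∏_{j=1}^{n} (j−1)! / ∏_{k=1}^{m+n} (k−1)! restricted appropriately — equivalently ∏_{i=0}^{m-1} i! / (n+i)!. -/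

import Mathlib

open Polynomial

/-- P_s(x) = ∑_{i+2j=s} x^i / (6^j i! j!) for s ≥ 0, and P_s = 0 for s < 0. -/
noncomputable def genHermiteEntry (s : ℤ) : Polynomial ℝ :=
  if 0 ≤ s then
    ∑ j ∈ Finset.range (s.toNat / 2 + 1),
      Polynomial.C (1 / (6 ^ j * (Nat.factorial (s.toNat - 2 * j)) * (Nat.factorial j) : ℝ))
        * Polynomial.X ^ (s.toNat - 2 * j)
  else 0

/-- The generalized Hermite polynomial H_{m,n}(x) = det(P_{n−i+j})_{i,j=1,…,m}. -/
noncomputable def genHermite (m n : ℕ) : Polynomial ℝ :=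
  Matrix.det (Matrix.of fun i j : Fin m => genHermiteEntry ((n : ℤ) - (i : ℤ) + (j : ℤ)))

lemma genHermiteEntry_coeff_eq_zero {s : ℤ} {k : ℕ} (h : s < k) :
    (genHermiteEntry s).coeff k = 0 := by
  unfold genHermiteEntry
  split_ifs with hs
  · rw [finset_sum_coeff]
    apply Finset.sum_eq_zero
    intro j hj
    rw [coeff_C_mul, coeff_X_pow, if_neg, mul_zero]
    intro hjk
    omega
  · simp

lemma genHermiteEntry_natDegree_le (s : ℤ) :
    (genHermiteEntry s).natDegree ≤ s.toNat := by
  rw [Polynomial.natDegree_le_iff_coeff_eq_zero]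
  intro k hk
  exact genHermiteEntry_coeff_eq_zero (by omega)

lemma genHermiteEntry_coeff_toNat {s : ℤ} (hs : 0 ≤ s) :
    (genHermiteEntry s).coeff s.toNat = 1 / (Nat.factorial s.toNat : ℝ) := by
  unfold genHermiteEntry
  rw [if_pos hs, finset_sum_coeff, Finset.sum_eq_single 0]
  · simp [coeff_C_mul, coeff_X_pow]
  · intro j hj hj0
    rw [coeff_C_mul, coeff_X_pow, if_neg, mul_zero]
    have := Finset.mem_range.mp hj
    omega
  · intro h
    exact absurd (Finset.mem_range.mpr (Nat.succ_pos _)) h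

/-- coefficient of a product at the sum of degree bounds. -/
lemma coeff_prod_of_le {ι : Type*} (s : Finset ι) (f : ι → Polynomial ℝ) (d : ι → ℕ)
    (h : ∀ i ∈ s, (f i).natDegree ≤ d i) :
    (∏ i ∈ s, f i).coeff (∑ i ∈ s, d i) = ∏ i ∈ s, (f i).coeff (d i) := by
  induction s using Finset.cons_induction with
  | empty => simp
  | cons a s ha ih =>
    rw [Finset.prod_cons, Finset.sum_cons,
      Polynomial.coeff_mul_add_eq_of_natDegree_le (h a (Finset.mem_cons_self a s))
        (le_trans (Polynomial.natDegree_prod_le (s := s) (f := f)) (Finset.sum_le_sum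
          (fun i hi => h i (Finset.mem_cons_of_mem hi)))),
      ih (fun i hi => h i (Finset.mem_cons_of_mem hi)), Finset.prod_cons]

lemma det_vandermonde_nat_add (m n : ℕ) :
    (Matrix.vandermonde (fun i : Fin m => ((n + (i : ℕ) : ℕ) : ℝ))).det
      = ∏ i ∈ Finset.range m, (Nat.factorial i : ℝ) := by
  match m with
  | 0 => simp [Matrix.det_vandermonde]
  | m + 1 =>
    have : (fun i : Fin (m + 1) => ((n + (i : ℕ) : ℕ) : ℝ))
        = fun i : Fin (m + 1) => ((i : ℕ) : ℝ) + (n : ℝ) := by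
      funext i; push_cast; ring
    rw [this, Matrix.det_vandermonde_add, Matrix.det_vandermonde_id_eq_superFactorial,
      ← Nat.prod_range_succ_factorial]
    push_cast
    rfl

/-- H_{m,n} has degree mn and its leading coefficient equals
G(m+1)G(n+1)/G(m+n+1) = ∏_{i=0}^{m-1} i!/(n+i)!. -/
theorem genHermite_leadingCoeff (m n : ℕ) :
    (genHermite m n).natDegree = m * n ∧
      (genHermite m n).coeff (m * n)
        = ∏ i ∈ Finset.range m, (Nat.factorial i : ℝ) / (Nat.factorial (n + i) : ℝ) := by
  classical
  -- the term of the Leibniz expansion for a permutation σ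
  set T : Equiv.Perm (Fin m) → Polynomial ℝ :=
    fun σ => ∏ i : Fin m, genHermiteEntry ((n : ℤ) - ((σ i : ℕ) : ℤ) + ((i : ℕ) : ℤ)) with hT
  have hdet : genHermite m n
      = ∑ σ : Equiv.Perm (Fin m), Equiv.Perm.sign σ • T σ := by
    rw [genHermite, Matrix.det_apply]
    rfl
  -- the real matrix of leading coefficients
  set F : Matrix (Fin m) (Fin m) ℝ := Matrix.of fun i j : Fin m =>
    ((Nat.descFactorial (n + (j : ℕ)) (i : ℕ) : ℕ) : ℝ) / ((Nat.factorial (n + (j : ℕ)) : ℕ) : ℝ)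
    with hF
  -- key: coefficient of T σ at m*n
  have key : ∀ σ : Equiv.Perm (Fin m),
      (T σ).coeff (m * n) = ∏ i : Fin m, F (σ i) i := by
    intro σ
    by_cases hσ : ∀ i : Fin m, (σ i : ℕ) ≤ n + (i : ℕ)
    · set d : Fin m → ℕ := fun i => n + (i : ℕ) - (σ i : ℕ) with hd
      have hsum : ∑ i : Fin m, d i = m * n := by
        have h1 : ∑ i : Fin m, (d i + (σ i : ℕ)) = ∑ i : Fin m, (n + (i : ℕ)) := by
          apply Finset.sum_congr rfl
          intro i _
          have := hσ i
          simp only [hd]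
          omega
        rw [Finset.sum_add_distrib] at h1
        have h2 : ∑ i : Fin m, ((σ i : ℕ)) = ∑ i : Fin m, (i : ℕ) :=
          Equiv.sum_comp σ (fun i => (i : ℕ))
        have h3 : ∑ i : Fin m, (n + (i : ℕ)) = m * n + ∑ i : Fin m, (i : ℕ) := by
          rw [Finset.sum_add_distrib, Finset.sum_const, Finset.card_univ, Fintype.card_fin,
            smul_eq_mul]
        omega
      have hdeg : ∀ i ∈ (Finset.univ : Finset (Fin m)),
          (genHermiteEntry ((n : ℤ) - ((σ i : ℕ) : ℤ) + ((i : ℕ) : ℤ))).natDegree ≤ d i := by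
        intro i _
        refine le_trans (genHermiteEntry_natDegree_le _) ?_
        have := hσ i
        simp only [hd]
        omega
      rw [hT, ← hsum, coeff_prod_of_le _ _ _ hdeg]
      apply Finset.prod_congr rfl
      intro i _
      have hnn : (0 : ℤ) ≤ (n : ℤ) - ((σ i : ℕ) : ℤ) + ((i : ℕ) : ℤ) := by
        have := hσ i; omega
      have htn : ((n : ℤ) - ((σ i : ℕ) : ℤ) + ((i : ℕ) : ℤ)).toNat = d i := by
        have := hσ i
        simp only [hd]
        omega
      rw [← htn, genHermiteEntry_coeff_toNat hnn, htn, hF]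
      have hdi : d i = n + (i : ℕ) - (σ i : ℕ) := by simp only [hd]
      have hfac : (Nat.factorial (n + (i : ℕ) - (σ i : ℕ))) *
          Nat.descFactorial (n + (i : ℕ)) (σ i : ℕ) = Nat.factorial (n + (i : ℕ)) :=
        Nat.factorial_mul_descFactorial (hσ i)
      have hdne : ((Nat.factorial (d i) : ℕ) : ℝ) ≠ 0 := by
        exact_mod_cast Nat.factorial_ne_zero _
      have hne : ((Nat.factorial (n + (i : ℕ)) : ℕ) : ℝ) ≠ 0 := by
        exact_mod_cast Nat.factorial_ne_zero _
      rw [Matrix.of_apply, div_eq_div_iff hdne hne, one_mul, hdi, ← hfac]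
      push_cast
      ring
    · push_neg at hσ
      obtain ⟨i, hi⟩ := hσ
      have hzero : T σ = 0 := by
        rw [hT]
        apply Finset.prod_eq_zero (Finset.mem_univ i)
        have : (n : ℤ) - ((σ i : ℕ) : ℤ) + ((i : ℕ) : ℤ) < 0 := by omega
        rw [genHermiteEntry, if_neg (by omega)]
      have hFzero : F (σ i) i = 0 := by
        rw [hF, Matrix.of_apply, Nat.descFactorial_eq_zero_iff_lt.mpr hi]
        simp
      rw [hzero, Polynomial.coeff_zero]
      rw [eq_comm]
      exact Finset.prod_eq_zero (Finset.mem_univ i) hFzero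
  -- coefficient of det at m*n equals det F
  have hcoeff : (genHermite m n).coeff (m * n) = F.det := by
    rw [hdet, Polynomial.finset_sum_coeff, Matrix.det_apply]
    apply Finset.sum_congr rfl
    intro σ _
    rw [Polynomial.coeff_smul, key σ]
  -- computing det F
  have hFdet : F.det = ∏ i ∈ Finset.range m, (Nat.factorial i : ℝ) / (Nat.factorial (n + i) : ℝ) := by
    have h1 : F = Matrix.of fun i j : Fin m =>
        (((Nat.factorial (n + (j : ℕ)) : ℕ) : ℝ))⁻¹ *
          ((Nat.descFactorial (n + (j : ℕ)) (i : ℕ) : ℕ) : ℝ) := by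
      ext i j
      rw [hF, Matrix.of_apply, Matrix.of_apply, div_eq_inv_mul]
    have h2 : (Matrix.of fun i j : Fin m =>
        ((Nat.descFactorial (n + (j : ℕ)) (i : ℕ) : ℕ) : ℝ)).det
        = ∏ i ∈ Finset.range m, (Nat.factorial i : ℝ) := by
      have h3 : (Matrix.of fun i j : Fin m =>
          ((Nat.descFactorial (n + (j : ℕ)) (i : ℕ) : ℕ) : ℝ))
          = Matrix.transpose (Matrix.of fun i j : Fin m =>
            ((descPochhammer ℝ (j : ℕ)).eval ((n + (i : ℕ) : ℕ) : ℝ))) := by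
        ext i j
        simp only [Matrix.transpose_apply, Matrix.of_apply]
        rw [descPochhammer_eval_eq_descFactorial]
      rw [h3, Matrix.det_transpose,
        ← Matrix.det_eval_matrixOfPolynomials_eq_det_vandermonde
          (fun i : Fin m => ((n + (i : ℕ) : ℕ) : ℝ)) (fun j : Fin m => descPochhammer ℝ (j : ℕ))
          (fun i => descPochhammer_natDegree ℝ (i : ℕ)) (fun i => monic_descPochhammer ℝ _),
        det_vandermonde_nat_add]
    calc F.det = (∏ j : Fin m, (((Nat.factorial (n + (j : ℕ)) : ℕ) : ℝ))⁻¹) *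
          (Matrix.of fun i j : Fin m =>
            ((Nat.descFactorial (n + (j : ℕ)) (i : ℕ) : ℕ) : ℝ)).det := by
          rw [h1]; exact Matrix.det_mul_row _ _
      _ = ∏ i ∈ Finset.range m, (Nat.factorial i : ℝ) / (Nat.factorial (n + i) : ℝ) := by
          rw [h2, Fin.prod_univ_eq_prod_range (fun j => (((Nat.factorial (n + j) : ℕ) : ℝ))⁻¹),
            ← Finset.prod_mul_distrib]
          apply Finset.prod_congr rfl
          intro i _
          rw [div_eq_inv_mul]
  have hcoeffval : (genHermite m n).coeff (m * n)
      = ∏ i ∈ Finset.range m, (Nat.factorial i : ℝ) / (Nat.factorial (n + i) : ℝ) := by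
    rw [hcoeff, hFdet]
  refine ⟨?_, hcoeffval⟩
  -- coefficient above m*n vanishes
  have hne : (∏ i ∈ Finset.range m, (Nat.factorial i : ℝ) / (Nat.factorial (n + i) : ℝ)) ≠ 0 := by
    apply Finset.prod_ne_zero_iff.mpr
    intro i _
    apply div_ne_zero <;> exact_mod_cast Nat.factorial_ne_zero _
  have hle : (genHermite m n).natDegree ≤ m * n := by
    rw [Polynomial.natDegree_le_iff_coeff_eq_zero]
    intro N hN
    rw [hdet, Polynomial.finset_sum_coeff]
    apply Finset.sum_eq_zero
    intro σ _
    rw [Polynomial.coeff_smul]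
    by_cases hσ : ∀ i : Fin m, (σ i : ℕ) ≤ n + (i : ℕ)
    · have hdle : (T σ).natDegree ≤ m * n := by
        simp only [hT]
        refine le_trans (Polynomial.natDegree_prod_le Finset.univ
          (fun i : Fin m => genHermiteEntry ((n : ℤ) - ((σ i : ℕ) : ℤ) + ((i : ℕ) : ℤ)))) ?_
        calc ∑ i : Fin m,
              (genHermiteEntry ((n : ℤ) - ((σ i : ℕ) : ℤ) + ((i : ℕ) : ℤ))).natDegree
            ≤ ∑ i : Fin m, (n + (i : ℕ) - (σ i : ℕ)) := by
              apply Finset.sum_le_sum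
              intro i _
              refine le_trans (genHermiteEntry_natDegree_le _) ?_
              have := hσ i; omega
          _ = m * n := by
              have h1 : ∑ i : Fin m, ((n + (i : ℕ) - (σ i : ℕ)) + (σ i : ℕ))
                  = ∑ i : Fin m, (n + (i : ℕ)) := by
                apply Finset.sum_congr rfl
                intro i _
                have := hσ i; omega
              rw [Finset.sum_add_distrib] at h1
              have h2 : ∑ i : Fin m, ((σ i : ℕ)) = ∑ i : Fin m, (i : ℕ) :=
                Equiv.sum_comp σ (fun i => (i : ℕ))
              have h3 : ∑ i : Fin m, (n + (i : ℕ)) = m * n + ∑ i : Fin m, (i : ℕ) := by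
                rw [Finset.sum_add_distrib, Finset.sum_const, Finset.card_univ,
                  Fintype.card_fin, smul_eq_mul]
              omega
      rw [Polynomial.coeff_eq_zero_of_natDegree_lt (lt_of_le_of_lt hdle hN), smul_zero]
    · push_neg at hσ
      obtain ⟨i, hi⟩ := hσ
      have hzero : T σ = 0 := by
        rw [hT]
        apply Finset.prod_eq_zero (Finset.mem_univ i)
        rw [genHermiteEntry, if_neg (by omega)]
      rw [hzero, Polynomial.coeff_zero, smul_zero]
  refine le_antisymm hle ?_
  apply Polynomial.le_natDegree_of_ne_zero
  rw [hcoeffval]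
  exact hne
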